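/- For every integer k ≥ 0 and every α ∈ [0,1]: h(Bin(k,α)) ≤ h(Bin(k+1)). -/

import Mathlib

/-- The probabilities of the altered binomial distribution `Bin(k,α)` on `{0,…,k+1}`:
`p_α(i) = (1−α)·C(k,i)·2^{−k} + α·C(k,i−1)·2^{−k}`, with `C(k,−1) = C(k,k+1) = 0`. -/
noncomputable def binAltP (k : ℕ) (α : ℝ) (i : ℕ) : ℝ :=
  (1 - α) * (k.choose i : ℝ) / 2^k +
    α * (if 1 ≤ i then (k.choose (i-1) : ℝ) / 2^k else 0)

/-- The entropy of the altered binomial distribution `Bin(k,α)`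
(convention `0·log₂ 0 = 0`, automatic for `Real.logb`). -/
noncomputable def binAltEnt (k : ℕ) (α : ℝ) : ℝ :=
  -∑ i ∈ Finset.range (k+2), binAltP k α i * Real.logb 2 (binAltP k α i)

/-- The entropy of the binomial distribution `Bin(k)` on `{0,…,k}` with probabilities
`C(k,i)/2^k`. -/
noncomputable def binEnt (k : ℕ) : ℝ :=
  -∑ i ∈ Finset.range (k+1),
    ((k.choose i : ℝ) / 2^k) * Real.logb 2 ((k.choose i : ℝ) / 2^k)

namespace Stmt7Aux

open Finset

/-- Binomial `Bin(k+1)` probabilities. -/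
noncomputable def q (k i : ℕ) : ℝ := (((k+1).choose i : ℕ) : ℝ) / 2^(k+1)

/-- The signed difference `C(k,i) − C(k,i−1)`. -/
noncomputable def d (k i : ℕ) : ℝ :=
  (k.choose i : ℝ) - (if 1 ≤ i then (k.choose (i-1) : ℝ) else 0)

lemma q_pos {k i : ℕ} (hi : i ∈ Finset.range (k+2)) : 0 < q k i := by
  have hi' : i ≤ k + 1 := by simpa using Nat.lt_succ_iff.mp (Finset.mem_range.mp hi)
  have : 0 < (k+1).choose i := Nat.choose_pos hi'
  have h2 : (0:ℝ) < 2^(k+1) := by positivity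
  have : (0:ℝ) < ((k+1).choose i : ℝ) := by exact_mod_cast this
  exact div_pos this h2

lemma p_nonneg {k : ℕ} {α : ℝ} (hα0 : 0 ≤ α) (hα1 : α ≤ 1) (i : ℕ) :
    0 ≤ binAltP k α i := by
  unfold binAltP
  have h1 : (0:ℝ) ≤ 1 - α := by linarith
  have h2 : (0:ℝ) < 2^k := by positivity
  have hb : (0:ℝ) ≤ (if 1 ≤ i then (k.choose (i-1) : ℝ) / 2^k else 0) := by
    split <;> positivity
  have : (0:ℝ) ≤ (1 - α) * (k.choose i : ℝ) / 2^k := by positivity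
  nlinarith

lemma sum_choose_real (k : ℕ) :
    ∑ i ∈ range (k+1), (k.choose i : ℝ) = 2^k := by
  have := Nat.sum_range_choose k
  exact_mod_cast congrArg (Nat.cast : ℕ → ℝ) this

lemma sum_first (k : ℕ) :
    ∑ i ∈ range (k+2), (k.choose i : ℝ) / 2^k = 1 := by
  rw [Finset.sum_range_succ]
  have h0 : (k.choose (k+1) : ℝ) = 0 := by
    simp [Nat.choose_eq_zero_of_lt (Nat.lt_succ_self k)]
  rw [h0]
  rw [← Finset.sum_div, sum_choose_real]
  simp

lemma sum_second (k : ℕ) :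
    ∑ i ∈ range (k+2), (if 1 ≤ i then (k.choose (i-1) : ℝ) / 2^k else 0) = 1 := by
  rw [Finset.sum_range_succ']
  simp only [Nat.le_add_left, if_true, Nat.add_sub_cancel]
  have : ¬ (1 ≤ 0) := by omega
  rw [if_neg this]
  rw [← Finset.sum_div, sum_choose_real]
  simp

lemma sum_p {k : ℕ} (α : ℝ) : ∑ i ∈ range (k+2), binAltP k α i = 1 := by
  unfold binAltP
  rw [Finset.sum_add_distrib]
  have h1 : ∑ i ∈ range (k+2), (1 - α) * (k.choose i : ℝ) / 2^k
      = (1 - α) * ∑ i ∈ range (k+2), (k.choose i : ℝ) / 2^k := by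
    rw [Finset.mul_sum]; congr 1; ext i; ring
  have h2 : ∑ i ∈ range (k+2), α * (if 1 ≤ i then (k.choose (i-1) : ℝ) / 2^k else 0)
      = α * ∑ i ∈ range (k+2), (if 1 ≤ i then (k.choose (i-1) : ℝ) / 2^k else 0) := by
    rw [Finset.mul_sum]
  rw [h1, h2, sum_first, sum_second]; ring

lemma sum_q (k : ℕ) : ∑ i ∈ range (k+2), q k i = 1 := by
  unfold q
  rw [← Finset.sum_div, sum_choose_real]
  simp

/-- Pascal: `C(k+1,i) = C(k,i) + C(k,i-1)` with conventions. -/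
lemma pascal (k i : ℕ) :
    (((k+1).choose i : ℕ) : ℝ)
      = (k.choose i : ℝ) + (if 1 ≤ i then (k.choose (i-1) : ℝ) else 0) := by
  cases i with
  | zero => simp
  | succ j =>
      have : (k+1).choose (j+1) = k.choose j + k.choose (j+1) := Nat.choose_succ_succ k j
      rw [this]
      simp only [Nat.le_add_left, if_true, Nat.add_sub_cancel]
      push_cast; ring

lemma p_sub_q (k : ℕ) (α : ℝ) (i : ℕ) :
    binAltP k α i - q k i = (1/2 - α) * d k i / 2^k := by
  unfold binAltP q d
  rw [pascal]
  have h2 : (2:ℝ)^(k+1) = 2 * 2^k := by ring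
  rw [h2]
  have hpow : (2:ℝ)^k ≠ 0 := by positivity
  split <;> field_simp <;> ring

lemma d_reflect {k i : ℕ} (hi : i ≤ k + 1) : d k (k + 1 - i) = - d k i := by
  unfold d
  rcases Nat.eq_zero_or_pos i with h0 | h1
  · subst h0
    simp [Nat.choose_eq_zero_of_lt (Nat.lt_succ_self k), Nat.choose_self]
  rcases eq_or_lt_of_le hi with hk1 | hk
  · subst hk1
    simp [Nat.choose_eq_zero_of_lt (Nat.lt_succ_self k), Nat.choose_self]
  · -- 1 ≤ i ≤ k
    have hik : i ≤ k := by omega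
    have ha : 1 ≤ k + 1 - i := by omega
    rw [if_pos (show 1 ≤ i by omega), if_pos ha]
    have e1 : k + 1 - i = k - (i - 1) := by omega
    have e2 : k + 1 - i - 1 = k - i := by omega
    rw [e2, Nat.choose_symm hik, e1, Nat.choose_symm (show i - 1 ≤ k by omega)]
    ring

lemma q_reflect {k i : ℕ} (hi : i ≤ k + 1) : q k (k + 1 - i) = q k i := by
  unfold q
  rw [Nat.choose_symm hi]

lemma sum_dL (k : ℕ) :
    ∑ i ∈ range (k+2), d k i * Real.log (q k i) = 0 := by
  have hrefl := Finset.sum_range_reflect (fun i => d k i * Real.log (q k i)) (k+2)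
  have key : ∀ j ∈ range (k+2),
      d k (k + 2 - 1 - j) * Real.log (q k (k + 2 - 1 - j))
        = -(d k j * Real.log (q k j)) := by
    intro j hj
    have hj' : j ≤ k + 1 := by simpa using Nat.lt_succ_iff.mp (Finset.mem_range.mp hj)
    have e : k + 2 - 1 - j = k + 1 - j := by omega
    rw [e, d_reflect hj', q_reflect hj']
    ring
  rw [Finset.sum_congr rfl key, Finset.sum_neg_distrib] at hrefl
  linarith [hrefl]

/-- Cross entropy equals entropy of `q` (in natural log). -/
lemma cross_eq (k : ℕ) (α : ℝ) :
    ∑ i ∈ range (k+2), binAltP k α i * Real.log (q k i)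
      = ∑ i ∈ range (k+2), q k i * Real.log (q k i) := by
  have h : ∑ i ∈ range (k+2), (binAltP k α i - q k i) * Real.log (q k i) = 0 := by
    have : ∀ i ∈ range (k+2),
        (binAltP k α i - q k i) * Real.log (q k i)
          = ((1/2 - α) / 2^k) * (d k i * Real.log (q k i)) := by
      intro i _
      rw [p_sub_q]; ring
    rw [Finset.sum_congr rfl this, ← Finset.mul_sum, sum_dL]
    ring
  have := Finset.sum_sub_distrib (s := range (k+2))
    (f := fun i => binAltP k α i * Real.log (q k i))
    (g := fun i => q k i * Real.log (q k i))
  have h2 : ∑ i ∈ range (k+2), (binAltP k α i - q k i) * Real.log (q k i)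
      = ∑ i ∈ range (k+2), binAltP k α i * Real.log (q k i)
        - ∑ i ∈ range (k+2), q k i * Real.log (q k i) := by
    rw [← Finset.sum_sub_distrib]
    congr 1; ext i; ring
  linarith [h2 ▸ h]

/-- Gibbs' inequality (in natural log). -/
lemma gibbs (k : ℕ) {α : ℝ} (hα0 : 0 ≤ α) (hα1 : α ≤ 1) :
    ∑ i ∈ range (k+2), binAltP k α i * Real.log (q k i)
      ≤ ∑ i ∈ range (k+2), binAltP k α i * Real.log (binAltP k α i) := by
  have key : ∀ i ∈ range (k+2),
      binAltP k α i * Real.log (q k i) - binAltP k α i * Real.log (binAltP k α i)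
        ≤ q k i - binAltP k α i := by
    intro i hi
    have hq := q_pos hi
    rcases eq_or_lt_of_le (p_nonneg hα0 hα1 i (k := k)) with hp0 | hp
    · rw [← hp0]; simp; linarith
    · have hratio : (0:ℝ) < q k i / binAltP k α i := div_pos hq hp
      have hlog := Real.log_le_sub_one_of_pos hratio
      have : Real.log (q k i / binAltP k α i)
          = Real.log (q k i) - Real.log (binAltP k α i) :=
        Real.log_div (ne_of_gt hq) (ne_of_gt hp)
      rw [this] at hlog
      have := mul_le_mul_of_nonneg_left hlog (le_of_lt hp)
      calc binAltP k α i * Real.log (q k i) - binAltP k α i * Real.log (binAltP k α i)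
          = binAltP k α i * (Real.log (q k i) - Real.log (binAltP k α i)) := by ring
        _ ≤ binAltP k α i * (q k i / binAltP k α i - 1) := this
        _ = q k i - binAltP k α i := by field_simp
  have hs := Finset.sum_le_sum key
  rw [Finset.sum_sub_distrib, Finset.sum_sub_distrib, sum_q, sum_p α] at hs
  linarith

end Stmt7Aux

/-- For every `k ≥ 0` and `α ∈ [0,1]`: `h(Bin(k,α)) ≤ h(Bin(k+1))`. -/
theorem stmt_7 (k : ℕ) (α : ℝ) (hα0 : 0 ≤ α) (hα1 : α ≤ 1) :
    binAltEnt k α ≤ binEnt (k+1) := by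
  open Stmt7Aux Finset in
  have hlog2 : (0:ℝ) < Real.log 2 := Real.log_pos (by norm_num)
  have hA : binAltEnt k α
      = -(∑ i ∈ range (k+2), binAltP k α i * Real.log (binAltP k α i)) / Real.log 2 := by
    unfold binAltEnt
    rw [eq_div_iff (ne_of_gt hlog2), neg_mul, neg_inj, Finset.sum_mul]
    apply Finset.sum_congr rfl
    intro i _
    rw [Real.logb]
    field_simp
    try ring
  have hB : binEnt (k+1)
      = -(∑ i ∈ range (k+2), q k i * Real.log (q k i)) / Real.log 2 := by
    unfold binEnt Stmt7Aux.q
    rw [eq_div_iff (ne_of_gt hlog2), neg_mul, neg_inj, Finset.sum_mul]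
    apply Finset.sum_congr rfl
    intro i _
    rw [Real.logb]
    field_simp
    try ring
  rw [hA, hB]
  have h1 := gibbs k hα0 hα1
  have h2 := cross_eq k α
  have h3 : ∑ i ∈ range (k+2), q k i * Real.log (q k i)
      ≤ ∑ i ∈ range (k+2), binAltP k α i * Real.log (binAltP k α i) := by linarith
  gcongr
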